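/- arXiv:2305.12475 — 2 statements merged into one kernel-verified Lean document; each statement's English description precedes it below -/
import Mathlib

section
/- Let f : ℝᵈ → ℝ be ℓ-smooth, let g_t be a gradient estimate, and define e_t = g_t − ∇f(x_t). If x_{t+1} = x_t − (γ_t/‖g_t‖) g_t with γ_t > 0 and g_t ≠ 0, then f(x_{t+1}) − f(x_t) ≤ −(γ_t/3)‖∇f(x_t)‖ + (8γ_t/3)‖e_t‖ + ℓγ_t²/2. -/
open InnerProductSpace

lemma descent_aux {d : ℕ} (f : EuclideanSpace ℝ (Fin d) → ℝ) (ℓ : ℝ)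
    (hℓ : 0 ≤ ℓ) (hdiff : Differentiable ℝ f)
    (hlip : ∀ x y, ‖gradient f x - gradient f y‖ ≤ ℓ * ‖x - y‖)
    (x v : EuclideanSpace ℝ (Fin d)) :
    f (x + v) ≤ f x + inner ℝ (gradient f x) v + ℓ / 2 * ‖v‖ ^ 2 := by
  set c : ℝ := inner ℝ (gradient f x) v with hc
  set φ : ℝ → ℝ := fun t => f (x + t • v) - t * c - ℓ * ‖v‖ ^ 2 * t ^ 2 / 2 with hφdef
  have hline : ∀ t : ℝ, HasDerivAt (fun t : ℝ => x + t • v) v t := by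
    intro t
    have := ((hasDerivAt_id t).smul_const v).const_add x
    simpa using this
  have hφ : ∀ t : ℝ, HasDerivAt φ
      ((inner ℝ (gradient f (x + t • v)) v : ℝ) - c - ℓ * ‖v‖ ^ 2 * t) t := by
    intro t
    have h1 : HasDerivAt (fun t : ℝ => f (x + t • v))
        (inner ℝ (gradient f (x + t • v)) v : ℝ) t := by
      have hf := (hdiff (x + t • v)).hasGradientAt
      rw [hasGradientAt_iff_hasFDerivAt] at hf
      have := hf.comp_hasDerivAt t (hline t)
      simp only [InnerProductSpace.toDual_apply_apply] at this
      exact this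
    have h2 : HasDerivAt (fun t : ℝ => t * c) c t := by simpa using (hasDerivAt_id t).mul_const c
    have h3 : HasDerivAt (fun t : ℝ => ℓ * ‖v‖ ^ 2 * t ^ 2 / 2)
        (ℓ * ‖v‖ ^ 2 * t) t := by
      have := ((hasDerivAt_pow 2 t).const_mul (ℓ * ‖v‖ ^ 2)).div_const 2
      convert this using 1
      · rfl
      · rfl
      · norm_num
        ring
    exact (h1.sub h2).sub h3
  have hmono : AntitoneOn φ (Set.Icc (0 : ℝ) 1) := by
    apply antitoneOn_of_deriv_nonpos (convex_Icc 0 1)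
    · exact fun t _ => ((hφ t).differentiableAt.continuousAt).continuousWithinAt
    · exact fun t _ => (hφ t).differentiableAt.differentiableWithinAt
    · intro t ht
      rw [interior_Icc] at ht
      rw [(hφ t).deriv]
      have hineq : (inner ℝ (gradient f (x + t • v) - gradient f x) v : ℝ)
          ≤ ℓ * t * ‖v‖ ^ 2 := by
        have h4 := real_inner_le_norm (gradient f (x + t • v) - gradient f x) v
        have h5 := hlip (x + t • v) x
        have h6 : ‖(x + t • v) - x‖ = t * ‖v‖ := by
          rw [add_sub_cancel_left, norm_smul, Real.norm_eq_abs, abs_of_pos ht.1]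
        rw [h6] at h5
        nlinarith [norm_nonneg v, norm_nonneg (gradient f (x + t • v) - gradient f x)]
      rw [inner_sub_left] at hineq
      linarith
  have h01 := hmono (Set.mem_Icc.2 ⟨le_refl 0, zero_le_one⟩)
    (Set.mem_Icc.2 ⟨zero_le_one, le_refl 1⟩) zero_le_one
  simp only [hφdef, one_smul, zero_smul, add_zero, zero_mul, zero_pow, one_mul, one_pow,
    mul_zero, sub_zero] at h01
  linarith [h01]

theorem stmt_17 {d : ℕ} (f : EuclideanSpace ℝ (Fin d) → ℝ) (ℓ γ : ℝ)
    (hℓ : 0 < ℓ) (hγ : 0 < γ) (hdiff : Differentiable ℝ f)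
    (hlip : ∀ x y, ‖gradient f x - gradient f y‖ ≤ ℓ * ‖x - y‖)
    (x g e : EuclideanSpace ℝ (Fin d)) (hg : g ≠ 0)
    (he : e = g - gradient f x)
    (y : EuclideanSpace ℝ (Fin d)) (hy : y = x - (γ / ‖g‖) • g) :
    f y - f x ≤ -(γ / 3) * ‖gradient f x‖ + (8 * γ / 3) * ‖e‖ + ℓ * γ ^ 2 / 2 := by
  have hgn : (0 : ℝ) < ‖g‖ := norm_pos_iff.2 hg
  set v : EuclideanSpace ℝ (Fin d) := -((γ / ‖g‖) • g) with hv
  have hyv : y = x + v := by rw [hy, hv, sub_eq_add_neg]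
  have hnv : ‖v‖ = γ := by
    rw [hv, norm_neg, norm_smul, Real.norm_eq_abs, abs_of_pos (div_pos hγ hgn)]
    field_simp
  have hd := descent_aux f ℓ hℓ.le hdiff hlip x v
  rw [← hyv, hnv] at hd
  -- bound the inner product term
  have hgrad : gradient f x = g - e := by rw [he]; abel
  have hinner : (inner ℝ (gradient f x) v : ℝ) = -(γ / ‖g‖) * (‖g‖ ^ 2 - inner ℝ e g) := by
    rw [hv, hgrad, inner_neg_right, inner_smul_right, inner_sub_left,
      real_inner_self_eq_norm_sq]
    ring
  have heg : (inner ℝ e g : ℝ) ≤ ‖e‖ * ‖g‖ := real_inner_le_norm e g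
  have hinner2 : (inner ℝ (gradient f x) v : ℝ) ≤ -γ * ‖g‖ + γ * ‖e‖ := by
    rw [hinner]
    have h1 : -(γ / ‖g‖) * (‖g‖ ^ 2 - inner ℝ e g)
        ≤ -(γ / ‖g‖) * (‖g‖ ^ 2 - ‖e‖ * ‖g‖) := by
      apply mul_le_mul_of_nonpos_left _ (neg_nonpos.2 (by positivity))
      linarith
    calc -(γ / ‖g‖) * (‖g‖ ^ 2 - inner ℝ e g)
        ≤ -(γ / ‖g‖) * (‖g‖ ^ 2 - ‖e‖ * ‖g‖) := h1
      _ = -γ * ‖g‖ + γ * ‖e‖ := by field_simp; ring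
  have hng : ‖gradient f x‖ ≤ ‖g‖ + ‖e‖ := by
    rw [hgrad]
    exact norm_sub_le g e
  nlinarith [mul_le_mul_of_nonneg_left hng hγ.le, mul_nonneg hγ.le (norm_nonneg e), mul_nonneg hγ.le (norm_nonneg (gradient f x))]
end

section
/- Let v̂ be defined recursively by v̂_0 = v_0 > 0 and v̂_{t+1} = max{v̂_t, ‖∇f(x_t)‖} along iterates of deterministic AMSGrad-norm without momentum on an ℓ-smooth f with stepsize γ_t = γ/√(t+1): x_{t+1} = x_t − (γ_t/v̂_{t+1})∇f(x_t). If τ is the first index with γ_τ/v̂_{τ+1} ≤ 1/ℓ and τ ≥ 1, then f(x_τ) − f(x_0) ≤ (ℓγ²/2)(1 + log τ) ≤ (ℓγ²/2)(1 + log(ℓγ/v_0)²). -/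
open Finset

open Set in

lemma descent {d : ℕ} (f : EuclideanSpace ℝ (Fin d) → ℝ) (ℓ : ℝ) (hℓ : 0 ≤ ℓ)
    (hdiff : Differentiable ℝ f)
    (hlip : ∀ x y, ‖gradient f x - gradient f y‖ ≤ ℓ * ‖x - y‖)
    (x u : EuclideanSpace ℝ (Fin d)) :
    f (x + u) ≤ f x + inner ℝ (gradient f x) u + ℓ / 2 * ‖u‖ ^ 2 := by
  set g : ℝ → ℝ := fun t => f (x + t • u) with hg
  have hline : ∀ t : ℝ, HasDerivAt (fun t : ℝ => x + t • u) u t := by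
    intro t
    simpa using ((hasDerivAt_id t).smul_const u).const_add x
  have hgd : ∀ t : ℝ, HasDerivAt g (inner ℝ (gradient f (x + t • u)) u : ℝ) t := by
    intro t
    have h1 : HasGradientAt f (gradient f (x + t • u)) (x + t • u) :=
      (hdiff _).hasGradientAt
    have := h1.hasFDerivAt.comp_hasDerivAt t (hline t)
    exact this
  set B : ℝ → ℝ := fun t => f x + t * inner ℝ (gradient f x) u + ℓ * ‖u‖ ^ 2 * (t ^ 2 / 2) with hB
  have hBd : ∀ t : ℝ, HasDerivAt B (inner ℝ (gradient f x) u + ℓ * ‖u‖ ^ 2 * t) t := by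
    intro t
    have h1 : HasDerivAt (fun t : ℝ => f x + t * inner ℝ (gradient f x) u)
        (inner ℝ (gradient f x) u : ℝ) t := by
      simpa using ((hasDerivAt_id t).mul_const (inner ℝ (gradient f x) u : ℝ)).const_add (f x)
    have h2 : HasDerivAt (fun t : ℝ => ℓ * ‖u‖ ^ 2 * (t ^ 2 / 2)) (ℓ * ‖u‖ ^ 2 * t) t := by
      have : HasDerivAt (fun t : ℝ => t ^ 2 / 2) t t := by
        simpa using (hasDerivAt_pow 2 t).div_const 2
      simpa [mul_comm, mul_assoc] using this.const_mul (ℓ * ‖u‖ ^ 2)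
    exact h1.add h2
  have bound : ∀ t ∈ Ico (0:ℝ) 1,
      (inner ℝ (gradient f (x + t • u)) u : ℝ) ≤ inner ℝ (gradient f x) u + ℓ * ‖u‖ ^ 2 * t := by
    intro t ht
    have h1 : (inner ℝ (gradient f (x + t • u)) u : ℝ) - inner ℝ (gradient f x) u
        = inner ℝ (gradient f (x + t • u) - gradient f x) u := by
      rw [inner_sub_left]
    have h2 : (inner ℝ (gradient f (x + t • u) - gradient f x) u : ℝ)
        ≤ ‖gradient f (x + t • u) - gradient f x‖ * ‖u‖ :=
      real_inner_le_norm _ _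
    have h3 : ‖gradient f (x + t • u) - gradient f x‖ ≤ ℓ * (t * ‖u‖) := by
      have := hlip (x + t • u) x
      simpa [norm_smul, abs_of_nonneg ht.1] using this
    have h4 : ‖gradient f (x + t • u) - gradient f x‖ * ‖u‖ ≤ ℓ * (t * ‖u‖) * ‖u‖ :=
      mul_le_mul_of_nonneg_right h3 (norm_nonneg _)
    have h5 : ℓ * (t * ‖u‖) * ‖u‖ = ℓ * ‖u‖ ^ 2 * t := by ring
    linarith
  have ha : g 0 ≤ B 0 := by simp [hg, hB]
  have key : ∀ z ∈ Icc (0:ℝ) 1, g z ≤ B z :=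
    image_le_of_deriv_right_le_deriv_boundary
      (fun t _ => (hgd t).continuousAt.continuousWithinAt)
      (fun t ht => (hgd t).hasDerivWithinAt) ha
      (fun t _ => (hBd t).continuousAt.continuousWithinAt)
      (fun t ht => (hBd t).hasDerivWithinAt)
      (fun t ht => bound t ht)
  have := key 1 ⟨zero_le_one, le_refl 1⟩
  simp only [hg, hB, one_smul, one_pow, one_mul] at this
  linarith

theorem stmt_19 {d : ℕ} (f : EuclideanSpace ℝ (Fin d) → ℝ) (ℓ γ v0 : ℝ)
    (hℓ : 0 < ℓ) (hγ : 0 < γ) (hv0 : 0 < v0)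
    (hdiff : Differentiable ℝ f)
    (hlip : ∀ x y, ‖gradient f x - gradient f y‖ ≤ ℓ * ‖x - y‖)
    (x : ℕ → EuclideanSpace ℝ (Fin d)) (v : ℕ → ℝ)
    (hv : v 0 = v0) (hvrec : ∀ t, v (t + 1) = max (v t) ‖gradient f (x t)‖)
    (hupd : ∀ t : ℕ,
      x (t + 1) = x t - (γ / (Real.sqrt ((t : ℝ) + 1) * v (t + 1))) • gradient f (x t))
    (τ : ℕ) (hτ1 : 1 ≤ τ)
    (hτfirst : γ / (Real.sqrt ((τ : ℝ) + 1) * v (τ + 1)) ≤ 1 / ℓ)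
    (hτbefore : ∀ t < τ, 1 / ℓ < γ / (Real.sqrt ((t : ℝ) + 1) * v (t + 1))) :
    f (x τ) - f (x 0) ≤ (ℓ * γ ^ 2 / 2) * (1 + Real.log τ) ∧
      (ℓ * γ ^ 2 / 2) * (1 + Real.log τ) ≤
        (ℓ * γ ^ 2 / 2) * (1 + Real.log ((ℓ * γ / v0) ^ 2)) := by
  have hvpos : ∀ t, v0 ≤ v t := by
    intro t
    induction t with
    | zero => rw [hv]
    | succ n ih => rw [hvrec n]; exact ih.trans (le_max_left _ _)
  have hgnorm : ∀ t, ‖gradient f (x t)‖ ≤ v (t + 1) := by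
    intro t; rw [hvrec t]; exact le_max_right _ _
  have step : ∀ t : ℕ,
      f (x (t + 1)) ≤ f (x t) + ℓ * γ ^ 2 / 2 * (1 / ((t : ℝ) + 1)) := by
    intro t
    set η : ℝ := γ / (Real.sqrt ((t : ℝ) + 1) * v (t + 1)) with hη
    set g : EuclideanSpace ℝ (Fin d) := gradient f (x t) with hgdef
    have hs : 0 < Real.sqrt ((t : ℝ) + 1) := Real.sqrt_pos.mpr (by positivity)
    have hs2 : Real.sqrt ((t : ℝ) + 1) ^ 2 = (t : ℝ) + 1 := Real.sq_sqrt (by positivity)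
    have hvt : 0 < v (t + 1) := lt_of_lt_of_le hv0 (hvpos _)
    have hηpos : 0 < η := by positivity
    have hxe : x (t + 1) = x t + (-η) • g := by
      rw [hupd t]; rw [sub_eq_add_neg, neg_smul]
    have hd := descent f ℓ hℓ.le hdiff hlip (x t) ((-η) • g)
    rw [← hxe] at hd
    have hinner : (inner ℝ g ((-η) • g) : ℝ) = -η * ‖g‖ ^ 2 := by
      rw [real_inner_smul_right, real_inner_self_eq_norm_sq]
    rw [hinner] at hd
    have hnorm : ‖(-η) • g‖ ^ 2 = (η * ‖g‖) ^ 2 := by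
      rw [norm_smul]; rw [norm_neg, Real.norm_eq_abs, abs_of_pos hηpos]
    rw [hnorm] at hd
    have hηg : η * ‖g‖ ≤ γ / Real.sqrt ((t : ℝ) + 1) := by
      rw [hη, div_mul_eq_mul_div, div_le_div_iff₀ (by positivity) hs]
      have hgv : ‖g‖ ≤ v (t + 1) := hgnorm t
      have hmul := mul_le_mul_of_nonneg_left hgv (mul_nonneg hγ.le hs.le)
      nlinarith [hmul]
    have hηg2 : (η * ‖g‖) ^ 2 ≤ γ ^ 2 / ((t : ℝ) + 1) := by
      have h1 : (η * ‖g‖) ^ 2 ≤ (γ / Real.sqrt ((t : ℝ) + 1)) ^ 2 :=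
        pow_le_pow_left₀ (by positivity) hηg 2
      rwa [div_pow, hs2] at h1
    have hneg : -η * ‖g‖ ^ 2 ≤ 0 := by nlinarith [sq_nonneg ‖g‖]
    have : ℓ / 2 * (η * ‖g‖) ^ 2 ≤ ℓ / 2 * (γ ^ 2 / ((t : ℝ) + 1)) := by
      exact mul_le_mul_of_nonneg_left hηg2 (by positivity)
    have heq : ℓ / 2 * (γ ^ 2 / ((t : ℝ) + 1)) = ℓ * γ ^ 2 / 2 * (1 / ((t : ℝ) + 1)) := by
      ring
    linarith
  have tele : ∀ n : ℕ, f (x n) - f (x 0) ≤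
      ∑ t ∈ Finset.range n, ℓ * γ ^ 2 / 2 * (1 / ((t : ℝ) + 1)) := by
    intro n
    induction n with
    | zero => simp
    | succ n ih =>
      rw [Finset.sum_range_succ]
      have := step n
      linarith
  have hharm : ∑ t ∈ Finset.range τ, (1 / ((t : ℝ) + 1)) = ((harmonic τ : ℚ) : ℝ) := by
    rw [harmonic]; push_cast; simp [one_div]
  have hτpos : (0 : ℝ) < τ := by exact_mod_cast hτ1
  have hlog : ((harmonic τ : ℚ) : ℝ) ≤ 1 + Real.log τ := harmonic_le_one_add_log τ
  have part1 : f (x τ) - f (x 0) ≤ (ℓ * γ ^ 2 / 2) * (1 + Real.log τ) := by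
    have h1 := tele τ
    rw [← Finset.mul_sum, hharm] at h1
    have h2 : ℓ * γ ^ 2 / 2 * ((harmonic τ : ℚ) : ℝ) ≤ ℓ * γ ^ 2 / 2 * (1 + Real.log τ) :=
      mul_le_mul_of_nonneg_left hlog (by positivity)
    linarith
  refine ⟨part1, ?_⟩
  -- τ ≤ (ℓγ/v0)^2
  have ht := hτbefore (τ - 1) (by omega)
  have hcast : ((τ - 1 : ℕ) : ℝ) + 1 = (τ : ℝ) := by
    rw [Nat.cast_sub hτ1]; ring
  have hidx : (τ - 1) + 1 = τ := by omega
  rw [hcast, hidx] at ht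
  have hsτ : 0 < Real.sqrt τ := Real.sqrt_pos.mpr hτpos
  have hvτ : 0 < v τ := lt_of_lt_of_le hv0 (hvpos _)
  have hlt : Real.sqrt τ * v τ < ℓ * γ := by
    rw [div_lt_div_iff₀ hℓ (by positivity)] at ht
    nlinarith
  have hτle : (τ : ℝ) ≤ (ℓ * γ / v0) ^ 2 := by
    have h1 : Real.sqrt τ ≤ ℓ * γ / v0 := by
      rw [le_div_iff₀ hv0]
      nlinarith [hvpos τ, hsτ.le]
    have h2 : Real.sqrt τ ^ 2 ≤ (ℓ * γ / v0) ^ 2 := pow_le_pow_left₀ hsτ.le h1 2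
    rwa [Real.sq_sqrt hτpos.le] at h2
  have hloglog : Real.log τ ≤ Real.log ((ℓ * γ / v0) ^ 2) :=
    Real.log_le_log hτpos hτle
  have : (1 : ℝ) + Real.log τ ≤ 1 + Real.log ((ℓ * γ / v0) ^ 2) := by linarith
  exact mul_le_mul_of_nonneg_left this (by positivity)
end
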